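/- Let A = (V, V0, V1, E) be an arena and let w be a play prefix in A (a nonempty finite word whose consecutive letters are related by E). If Score_F(w) ≥ 2 for some F ⊆ V, then F is a loop of A, i.e., F is a strongly connected subset of V: for all u, u' ∈ F there is a path from u to u' visiting only vertices in F. -/

import Mathlib

variable {V : Type*}

/-- One step of the score/accumulator update: reading letter `v` after having
score/accumulator pair `s` for the set `F`. -/
def mgStep [DecidableEq V] (F : Finset V) (s : ℕ × Finset V) (v : V) : ℕ × Finset V :=
  if v ∈ F then
    if s.2 = F.erase v then (s.1 + 1, (∅ : Finset V)) else (s.1, insert v s.2)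
  else (0, (∅ : Finset V))

/-- `scoreAcc F w = (Score_F(w), Acc_F(w))` for a (nonempty) finite word `w`. -/
def scoreAcc [DecidableEq V] (F : Finset V) (w : List V) : ℕ × Finset V :=
  w.foldl (mgStep F) (0, ∅)

/-- An arena: a directed graph without terminal vertices, with the positions `V0`
of Player 0; Player 1's positions are the complement. -/
structure Arena (V : Type*) where
  V0 : Set V
  E : V → V → Prop
  succ : ∀ v, ∃ u, E v u

/-- The positions of Player `i`. -/
def Arena.pos (A : Arena V) (i : Fin 2) : Set V := if i = 0 then A.V0 else A.V0ᶜ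

/-- An infinite play in the arena. -/
def IsPlay (A : Arena V) (ρ : ℕ → V) : Prop := ∀ n, A.E (ρ n) (ρ (n + 1))

/-- The prefix `ρ_0 ⋯ ρ_{n-1}` (of length `n`) of an infinite word. -/
def prefixList (ρ : ℕ → V) (n : ℕ) : List V := (List.range n).map ρ

/-- The set of letters occurring infinitely often. -/
def infSet (ρ : ℕ → V) : Set V := {v | ∀ N, ∃ n, N ≤ n ∧ ρ n = v}

/-- The infinity set as a finset. -/
noncomputable def infFinset [Fintype V] (ρ : ℕ → V) : Finset V :=
  (Set.toFinite (infSet ρ)).toFinset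

/-- A loop: a strongly connected subset, i.e. any two of its vertices are joined
by a path visiting only vertices of the set. -/
def IsLoop (A : Arena V) (C : Set V) : Prop :=
  ∀ u ∈ C, ∀ u' ∈ C, Relation.ReflTransGen (fun a b => A.E a b ∧ a ∈ C ∧ b ∈ C) u u'

/-- A strategy, given as a function from (history, current vertex) to the next
vertex, which must move along an edge. -/
def IsStrat (A : Arena V) (σ : List V → V → V) : Prop := ∀ w v, A.E v (σ w v)

/-- A play consistent with the strategy `σ` of Player `i`. -/
def ConsWith (A : Arena V) (i : Fin 2) (σ : List V → V → V) (ρ : ℕ → V) : Prop :=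
  IsPlay A ρ ∧ ∀ n, ρ n ∈ A.pos i → ρ (n + 1) = σ (prefixList ρ n) (ρ n)

/-- The winning region of Player `i` in the Muller game on `A` with winning
families `Fam 0`, `Fam 1`. -/
def MullerWinRegion [Fintype V] [DecidableEq V] (A : Arena V)
    (Fam : Fin 2 → Set (Finset V)) (i : Fin 2) : Set V :=
  {v | ∃ σ, IsStrat A σ ∧ ∀ ρ, ρ 0 = v → ConsWith A i σ ρ → infFinset ρ ∈ Fam i}

/-- The "stay inside `F`" reachability relation. -/
private def Rf (A : Arena V) (F : Finset V) : V → V → Prop :=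
  Relation.ReflTransGen (fun a b => A.E a b ∧ a ∈ (↑F : Set V) ∧ b ∈ (↑F : Set V))

/-- The invariant maintained by `mgStep` along a play prefix ending in `ℓ`. -/
private def MGInv [DecidableEq V] (A : Arena V) (F : Finset V) (s : ℕ × Finset V) (ℓ : V) :
    Prop :=
  (s.2.Nonempty → ℓ ∈ F ∧ ∀ u ∈ s.2, Rf A F u ℓ) ∧
  (1 ≤ s.1 → ℓ ∈ F ∧ ∃ p ∈ F, (∀ u ∈ F, Rf A F u p) ∧ (∀ u ∈ s.2, Rf A F p u) ∧ Rf A F p ℓ) ∧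
  (2 ≤ s.1 → ∀ u ∈ F, ∀ u' ∈ F, Rf A F u u')

private lemma inv_base [DecidableEq V] (A : Arena V) (F : Finset V) (ℓ : V) :
    MGInv A F (mgStep F (0, ∅) ℓ) ℓ := by
  unfold mgStep
  by_cases hℓ : ℓ ∈ F
  · by_cases hA : (∅ : Finset V) = F.erase ℓ
    · simp only [hℓ, if_true, ← hA, if_pos rfl]
      refine ⟨by simp, fun _ => ⟨hℓ, ℓ, hℓ, ?_, by simp, .refl⟩, by omega⟩
      intro u hu
      have : u = ℓ := by
        by_contra h
        have : u ∈ F.erase ℓ := Finset.mem_erase.2 ⟨h, hu⟩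
        rw [← hA] at this; simp at this
      subst this; exact .refl
    · have : ((0, (∅ : Finset V)) : ℕ × Finset V).2 ≠ F.erase ℓ := hA
      simp only [hℓ, if_true, if_neg this]
      refine ⟨fun _ => ⟨hℓ, ?_⟩, by omega, by omega⟩
      intro u hu
      have : u = ℓ := by simpa using hu
      subst this; exact .refl
  · simp only [hℓ, if_false]
    exact ⟨by simp, by omega, by omega⟩

private lemma inv_step [DecidableEq V] (A : Arena V) (F : Finset V)
    {s : ℕ × Finset V} {ℓ' ℓ : V} (hInv : MGInv A F s ℓ') (hE : A.E ℓ' ℓ) :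
    MGInv A F (mgStep F s ℓ) ℓ := by
  obtain ⟨h1, h2, h3⟩ := hInv
  unfold mgStep
  by_cases hℓ : ℓ ∈ F
  · by_cases hA : s.2 = F.erase ℓ
    · -- increment case
      simp only [hℓ, if_true, if_pos hA]
      rcases Nat.eq_zero_or_pos s.1 with hs0 | hs1
      · -- first increment: pivot ℓ
        refine ⟨by simp, fun _ => ⟨hℓ, ℓ, hℓ, ?_, by simp, .refl⟩, by omega⟩
        intro u hu
        by_cases huℓ : u = ℓ
        · subst huℓ; exact .refl
        · have hus : u ∈ s.2 := hA ▸ Finset.mem_erase.2 ⟨huℓ, hu⟩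
          obtain ⟨hℓ'F, hacc⟩ := h1 ⟨u, hus⟩
          exact (hacc u hus).tail ⟨hE, hℓ'F, hℓ⟩
      · -- later increment: new pivot ℓ
        obtain ⟨hℓ'F, p, hpF, ha, hb, hc⟩ := h2 hs1
        refine ⟨by simp, fun _ => ⟨hℓ, ℓ, hℓ, ?_, by simp, .refl⟩, fun _ => ?_⟩
        · intro u hu
          exact ((ha u hu).trans hc).tail ⟨hE, hℓ'F, hℓ⟩
        · -- score reaches ≥ 2: strong connectivity of F
          intro u hu u' hu'
          refine (ha u hu).trans ?_
          by_cases hu'ℓ : u' = ℓ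
          · subst hu'ℓ; exact hc.tail ⟨hE, hℓ'F, hℓ⟩
          · exact hb u' (hA ▸ Finset.mem_erase.2 ⟨hu'ℓ, hu'⟩)
    · -- accumulate case
      simp only [hℓ, if_true, if_neg hA]
      refine ⟨fun _ => ⟨hℓ, ?_⟩, fun hs1 => ?_, h3⟩
      · intro u hu
        rcases Finset.mem_insert.1 hu with rfl | hus
        · exact .refl
        · obtain ⟨hℓ'F, hacc⟩ := h1 ⟨u, hus⟩
          exact (hacc u hus).tail ⟨hE, hℓ'F, hℓ⟩
      · obtain ⟨hℓ'F, p, hpF, ha, hb, hc⟩ := h2 hs1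
        refine ⟨hℓ, p, hpF, ha, ?_, hc.tail ⟨hE, hℓ'F, hℓ⟩⟩
        intro u hu
        rcases Finset.mem_insert.1 hu with rfl | hus
        · exact hc.tail ⟨hE, hℓ'F, hℓ⟩
        · exact hb u hus
  · simp only [hℓ, if_false]
    exact ⟨by simp, by omega, by omega⟩

private lemma inv_scoreAcc [DecidableEq V] (A : Arena V) (F : Finset V) :
    ∀ (w : List V) (ℓ : V), List.Chain' A.E (w ++ [ℓ]) →
      MGInv A F (scoreAcc F (w ++ [ℓ])) ℓ := by
  intro w
  induction w using List.reverseRecOn with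
  | nil => intro ℓ _; simpa [scoreAcc] using inv_base A F ℓ
  | append_singleton xs x ih =>
    intro ℓ hch
    rw [List.Chain', List.isChain_append] at hch
    have hE : A.E x ℓ := hch.2.2 x (by simp) ℓ rfl
    have heq : scoreAcc F ((xs ++ [x]) ++ [ℓ]) = mgStep F (scoreAcc F (xs ++ [x])) ℓ := by
      simp [scoreAcc, List.foldl_append]
    rw [heq]
    exact inv_step A F (ih x hch.1) hE

/-- If `w` is a play prefix of the arena `A` and `Score_F(w) ≥ 2`
for some `F ⊆ V`, then `F` is a loop of `A`, i.e. a strongly connected subset. -/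
theorem score_ge_two_isLoop [Fintype V] [DecidableEq V] (A : Arena V) (w : List V)
    (hw : w ≠ []) (hchain : List.Chain' A.E w) (F : Finset V)
    (h2 : 2 ≤ (scoreAcc F w).1) :
    IsLoop A (↑F : Set V) := by
  rcases List.eq_nil_or_concat w with rfl | ⟨xs, ℓ, rfl⟩
  · exact absurd rfl hw
  · rw [List.concat_eq_append] at hchain h2
    have hInv := inv_scoreAcc A F xs ℓ hchain
    intro u hu u' hu'
    exact hInv.2.2 h2 u (by exact_mod_cast hu) u' (by exact_mod_cast hu')
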